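/- Strong law of large numbers for triangular arrays: Let {X_{n,i} : 1 ≤ i ≤ 2^n, n ∈ ℕ} be a triangular array of identically distributed, real-valued, integrable, mean-zero random variables on a probability space, such that for each fixed n the collection {X_{n,i} : 1 ≤ i ≤ 2^n} is independent. Then 2^{-n}(X_{n,1} + ⋯ + X_{n,2^n}) → 0 almost surely as n → ∞. -/

import Mathlib

open MeasureTheory ProbabilityTheory Filter
open scoped ENNReal NNReal Topology

lemma sl_two_pow_enn (n : ℕ) : (2:ℝ≥0∞)^n = ENNReal.ofReal ((2:ℝ)^n) := by
  rw [ENNReal.ofReal_pow (by norm_num : (0:ℝ) ≤ 2)]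
  norm_num

lemma sl_aux1 (c : ℝ) :
    (∑' n : ℕ, if (2:ℝ)^n ≤ |c| then (2:ℝ≥0∞)^n else 0) ≤ ENNReal.ofReal (2 * |c|) := by
  have hex : ∃ n : ℕ, |c| < 2^n := pow_unbounded_of_one_lt _ one_lt_two
  set k := Nat.find hex with hk
  have hzero : ∀ n ∉ Finset.range k, (if (2:ℝ)^n ≤ |c| then (2:ℝ≥0∞)^n else 0) = 0 := by
    intro n hn
    rw [Finset.mem_range, not_lt] at hn
    have : |c| < 2^n :=
      lt_of_lt_of_le (Nat.find_spec hex) (pow_le_pow_right₀ one_le_two hn)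
    rw [if_neg (not_le.2 this)]
  rw [tsum_eq_sum hzero]
  rcases Nat.eq_zero_or_pos k with h0 | hpos
  · rw [h0]; simp
  · obtain ⟨j, hj⟩ : ∃ j, k = j + 1 := ⟨k - 1, (Nat.succ_pred_eq_of_pos hpos).symm⟩
    have hjc : (2:ℝ)^j ≤ |c| := not_lt.1 (Nat.find_min hex (by omega))
    calc (∑ n ∈ Finset.range k, if (2:ℝ)^n ≤ |c| then (2:ℝ≥0∞)^n else 0)
        ≤ ∑ n ∈ Finset.range k, (2:ℝ≥0∞)^n :=
          Finset.sum_le_sum (fun i _ => by split <;> simp)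
      _ = ENNReal.ofReal (∑ n ∈ Finset.range k, (2:ℝ)^n) := by
          rw [ENNReal.ofReal_sum_of_nonneg (fun i _ => by positivity)]
          exact Finset.sum_congr rfl fun i _ => sl_two_pow_enn i
      _ ≤ ENNReal.ofReal (2 * |c|) := by
          apply ENNReal.ofReal_le_ofReal
          have hsum : (∑ n ∈ Finset.range k, (2:ℝ)^n) = 2^k - 1 := by
            rw [geom_sum_eq (by norm_num : (2:ℝ) ≠ 1)]; ring
          rw [hsum, hj, pow_succ]
          nlinarith [hjc]

lemma sl_aux2 (c : ℝ) :
    (∑' n : ℕ, if |c| ≤ (2:ℝ)^n then ((2:ℝ≥0∞)^n)⁻¹ * ENNReal.ofReal (c^2) else 0)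
      ≤ ENNReal.ofReal (2 + 2 * |c|) := by
  rcases eq_or_ne c 0 with rfl | hc
  · have h0 : ∀ n : ℕ,
        (if |(0:ℝ)| ≤ (2:ℝ)^n then ((2:ℝ≥0∞)^n)⁻¹ * ENNReal.ofReal ((0:ℝ)^2) else 0) = 0 :=
      fun n => by norm_num
    rw [tsum_congr h0, tsum_zero]
    exact zero_le
  have hc' : 0 < |c| := abs_pos.2 hc
  obtain ⟨K, hK⟩ : ∃ n : ℕ, |c| < 2^n := pow_unbounded_of_one_lt _ one_lt_two
  have hex : ∃ n : ℕ, |c| ≤ 2^n := ⟨K, hK.le⟩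
  set k := Nat.find hex with hk
  have hcond : ∀ n, k ≤ n → |c| ≤ (2:ℝ)^n := fun n hn =>
    (Nat.find_spec hex).trans (pow_le_pow_right₀ one_le_two hn)
  have hnot : ∀ i < k, ¬ (|c| ≤ (2:ℝ)^i) := fun i hi => Nat.find_min hex hi
  have hsplit : (∑' n : ℕ, if |c| ≤ (2:ℝ)^n then ((2:ℝ≥0∞)^n)⁻¹ * ENNReal.ofReal (c^2) else 0)
      = (∑ i ∈ Finset.range k,
          if |c| ≤ (2:ℝ)^i then ((2:ℝ≥0∞)^i)⁻¹ * ENNReal.ofReal (c^2) else 0)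
        + ∑' n : ℕ, (if |c| ≤ (2:ℝ)^(n+k) then ((2:ℝ≥0∞)^(n+k))⁻¹ * ENNReal.ofReal (c^2) else 0) :=
    (Summable.sum_add_tsum_nat_add' ENNReal.summable).symm
  have hfirst : (∑ i ∈ Finset.range k,
      if |c| ≤ (2:ℝ)^i then ((2:ℝ≥0∞)^i)⁻¹ * ENNReal.ofReal (c^2) else 0) = 0 :=
    Finset.sum_eq_zero fun i hi => if_neg (hnot i (Finset.mem_range.1 hi))
  have htail : ∀ n : ℕ,
      (if |c| ≤ (2:ℝ)^(n+k) then ((2:ℝ≥0∞)^(n+k))⁻¹ * ENNReal.ofReal (c^2) else 0)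
        = (((2:ℝ≥0∞)^k)⁻¹ * ENNReal.ofReal (c^2)) * ((2:ℝ≥0∞)⁻¹)^n := by
    intro n
    rw [if_pos (hcond _ (by omega)), pow_add,
      ENNReal.mul_inv (Or.inl (pow_ne_zero n two_ne_zero))
        (Or.inl (ENNReal.pow_ne_top ENNReal.ofNat_ne_top)), ← ENNReal.inv_pow]
    ring
  have htsum : (∑' n : ℕ,
      (if |c| ≤ (2:ℝ)^(n+k) then ((2:ℝ≥0∞)^(n+k))⁻¹ * ENNReal.ofReal (c^2) else 0))
        = ((2:ℝ≥0∞)^k)⁻¹ * ENNReal.ofReal (c^2) * 2 := by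
    rw [tsum_congr htail, ENNReal.tsum_mul_left, ENNReal.tsum_geometric,
      ENNReal.one_sub_inv_two, inv_inv]
  rw [hsplit, hfirst, zero_add, htsum]
  have hkey : ((2:ℝ≥0∞)^k)⁻¹ * ENNReal.ofReal (c^2) * 2
      ≤ ENNReal.ofReal (((2:ℝ)^k)⁻¹ * c^2 * 2) := by
    rw [ENNReal.ofReal_mul (by positivity), ENNReal.ofReal_mul (by positivity)]
    rw [ENNReal.ofReal_inv_of_pos (by positivity), ← sl_two_pow_enn]
    norm_num
  refine hkey.trans (ENNReal.ofReal_le_ofReal ?_)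
  have hck : |c| ≤ (2:ℝ)^k := Nat.find_spec hex
  have h2k : (0:ℝ) < 2^k := by positivity
  have h1 : c^2 ≤ |c| * 2^k := by nlinarith [sq_abs c, abs_nonneg c]
  have h2 : ((2:ℝ)^k)⁻¹ * c^2 * 2 ≤ ((2:ℝ)^k)⁻¹ * (|c| * 2^k) * 2 := by
    have hinv : (0:ℝ) ≤ ((2:ℝ)^k)⁻¹ := by positivity
    nlinarith
  have h3 : ((2:ℝ)^k)⁻¹ * (|c| * 2^k) * 2 = 2 * |c| := by field_simp
  linarith [abs_nonneg c]

/-- Strong law of large numbers for triangular arrays: if `{X n i : i < 2^n}` are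
identically distributed, integrable, mean-zero real random variables that are
independent within each row `n`, then `2^{-n} ∑_{i<2^n} X n i → 0` almost surely. -/
theorem sl_triangular_array {Ω : Type*} [MeasurableSpace Ω] (P : Measure Ω)
    [IsProbabilityMeasure P] (X : ℕ → ℕ → Ω → ℝ)
    (hmeas : ∀ n i, i < 2 ^ n → Measurable (X n i))
    (hident : ∀ n i, i < 2 ^ n → Measure.map (X n i) P = Measure.map (X 0 0) P)
    (hint : Integrable (X 0 0) P)
    (hmean : ∫ ω, X 0 0 ω ∂P = 0)
    (hindep : ∀ n, iIndepFun
      (fun i : Fin (2 ^ n) => X n i) P) :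
    ∀ᵐ ω ∂P, Tendsto (fun n => ((2 : ℝ) ^ n)⁻¹ * ∑ i ∈ Finset.range (2 ^ n), X n i ω)
      atTop (nhds 0) := by
  have h00 : Measurable (X 0 0) := hmeas 0 0 (by norm_num)
  have hid : ∀ n i, i < 2 ^ n → IdentDistrib (X n i) (X 0 0) P P := fun n i hi =>
    ⟨(hmeas n i hi).aemeasurable, h00.aemeasurable, hident n i hi⟩
  set T : ℕ → Ω → ℝ := fun n => truncation (X 0 0) ((2:ℝ)^n) with hT
  set mz : ℕ → ℝ := fun n => ∫ ω, T n ω ∂P with hmz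
  have hTmem : ∀ n, MemLp (T n) 2 P := fun n => h00.aestronglyMeasurable.memLp_truncation
  have hYmem : ∀ n i, i < 2 ^ n → MemLp (truncation (X n i) ((2:ℝ)^n)) 2 P := fun n i hi =>
    (hmeas n i hi).aestronglyMeasurable.memLp_truncation
  have hidY : ∀ n i, i < 2 ^ n →
      IdentDistrib (truncation (X n i) ((2:ℝ)^n)) (T n) P P := fun n i hi =>
    (hid n i hi).truncation
  have hm0 : Tendsto mz atTop (𝓝 0) := by
    have h1 : Tendsto (fun n : ℕ => (2:ℝ)^n) atTop atTop :=
      tendsto_pow_atTop_atTop_of_one_lt one_lt_two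
    have := (tendsto_integral_truncation hint).comp h1
    rwa [hmean] at this
  -- Step A : almost surely, eventually all entries of row `n` are below the truncation level
  have hsA : (∑' n : ℕ, P (⋃ i ∈ Finset.range (2^n), {ω | (2:ℝ)^n ≤ |X n i ω|})) ≠ ∞ := by
    have hbound : ∀ n : ℕ, P (⋃ i ∈ Finset.range (2^n), {ω | (2:ℝ)^n ≤ |X n i ω|})
        ≤ ∫⁻ ω, (if (2:ℝ)^n ≤ |X 0 0 ω| then (2:ℝ≥0∞)^n else 0) ∂P := by
      intro n
      have hset : MeasurableSet {x : ℝ | (2:ℝ)^n ≤ |x|} :=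
        (isClosed_le continuous_const continuous_abs).measurableSet
      calc P (⋃ i ∈ Finset.range (2^n), {ω | (2:ℝ)^n ≤ |X n i ω|})
          ≤ ∑ i ∈ Finset.range (2^n), P {ω | (2:ℝ)^n ≤ |X n i ω|} :=
            measure_biUnion_finset_le _ _
        _ = ∑ i ∈ Finset.range (2^n), P {ω | (2:ℝ)^n ≤ |X 0 0 ω|} :=
            Finset.sum_congr rfl fun i hi =>
              (hid n i (Finset.mem_range.1 hi)).measure_mem_eq hset
        _ = (2:ℝ≥0∞)^n * P {ω | (2:ℝ)^n ≤ |X 0 0 ω|} := by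
            rw [Finset.sum_const, Finset.card_range, nsmul_eq_mul]
            norm_cast
        _ = ∫⁻ ω, (if (2:ℝ)^n ≤ |X 0 0 ω| then (2:ℝ≥0∞)^n else 0) ∂P := by
            have hie : (fun ω => if (2:ℝ)^n ≤ |X 0 0 ω| then (2:ℝ≥0∞)^n else 0)
                = ({ω | (2:ℝ)^n ≤ |X 0 0 ω|}).indicator (fun _ => (2:ℝ≥0∞)^n) := by
              ext ω
              by_cases h : (2:ℝ)^n ≤ |X 0 0 ω|
              · rw [if_pos h]
                exact (Set.indicator_of_mem
                  (show ω ∈ {ω' | (2:ℝ)^n ≤ |X 0 0 ω'|} from h)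
                  (fun _ => (2:ℝ≥0∞)^n)).symm
              · rw [if_neg h]
                exact (Set.indicator_of_notMem
                  (show ω ∉ {ω' | (2:ℝ)^n ≤ |X 0 0 ω'|} from h)
                  (fun _ => (2:ℝ≥0∞)^n)).symm
            have hms : MeasurableSet {ω | (2:ℝ)^n ≤ |X 0 0 ω|} := h00 hset
            rw [hie, lintegral_indicator_const hms]
    have hlt : (∑' n : ℕ, ∫⁻ ω, (if (2:ℝ)^n ≤ |X 0 0 ω| then (2:ℝ≥0∞)^n else 0) ∂P) < ∞ := by
      have hmeas' : ∀ n : ℕ, Measurable fun ω =>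
          (if (2:ℝ)^n ≤ |X 0 0 ω| then (2:ℝ≥0∞)^n else 0) := by
        intro n
        exact Measurable.ite (h00 ((isClosed_le continuous_const continuous_abs).measurableSet))
          measurable_const measurable_const
      rw [← lintegral_tsum (fun n => (hmeas' n).aemeasurable)]
      have hb := lintegral_mono (μ := P) (fun ω => sl_aux1 (X 0 0 ω))
      refine hb.trans_lt ?_
      have hi2 : Integrable (fun ω => 2 * |X 0 0 ω|) P := hint.abs.const_mul 2
      have := hi2.hasFiniteIntegral
      rw [hasFiniteIntegral_iff_ofReal (Eventually.of_forall fun ω => by positivity)] at this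
      exact this
    exact (lt_of_le_of_lt (ENNReal.tsum_le_tsum hbound) hlt).ne
  have hAae : ∀ᵐ ω ∂P, ∀ᶠ n in atTop, ∀ i ∈ Finset.range (2^n), |X n i ω| < (2:ℝ)^n := by
    filter_upwards [ae_eventually_notMem hsA] with ω hω
    filter_upwards [hω] with n hn
    intro i hi
    by_contra hcon
    exact hn (Set.mem_iUnion₂.2 ⟨i, hi, not_lt.1 hcon⟩)
  -- variance estimates
  have hES : ∀ n, (∫ ω, (∑ i ∈ Finset.range (2^n), truncation (X n i) ((2:ℝ)^n) ω) ∂P)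
      = 2^n * mz n := by
    intro n
    rw [integral_finset_sum _
      (fun i hi => ((hYmem n i (Finset.mem_range.1 hi)).integrable one_le_two))]
    rw [Finset.sum_congr rfl (fun i hi => (hidY n i (Finset.mem_range.1 hi)).integral_eq)]
    rw [Finset.sum_const, Finset.card_range, nsmul_eq_mul]
    norm_cast
  have hvar : ∀ n, variance (fun ω => ∑ i ∈ Finset.range (2^n),
      truncation (X n i) ((2:ℝ)^n) ω) P ≤ 2^n * ∫ ω, (T n ω)^2 ∂P := by
    intro n
    have hfun : (fun ω => ∑ i ∈ Finset.range (2^n), truncation (X n i) ((2:ℝ)^n) ω)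
        = ∑ i ∈ Finset.range (2^n), (fun ω => truncation (X n i) ((2:ℝ)^n) ω) := by
      ext ω; rw [Finset.sum_apply]
    have hpair : Set.Pairwise ↑(Finset.range (2^n))
        (fun i j => IndepFun (truncation (X n i) ((2:ℝ)^n))
          (truncation (X n j) ((2:ℝ)^n)) P) := by
      intro i hi j hj hij
      rw [Finset.mem_coe, Finset.mem_range] at hi hj
      have hXij : IndepFun (X n i) (X n j) P :=
        (hindep n).indepFun (i := ⟨i, hi⟩) (j := ⟨j, hj⟩) (by simpa [Fin.ext_iff] using hij)
      exact hXij.comp (measurable_id.indicator measurableSet_Ioc)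
        (measurable_id.indicator measurableSet_Ioc)
    rw [hfun, IndepFun.variance_sum
      (fun i hi => hYmem n i (Finset.mem_range.1 hi)) hpair]
    calc (∑ i ∈ Finset.range (2^n), variance (truncation (X n i) ((2:ℝ)^n)) P)
        = ∑ i ∈ Finset.range (2^n), variance (T n) P :=
          Finset.sum_congr rfl fun i hi => (hidY n i (Finset.mem_range.1 hi)).variance_eq
      _ = (2:ℝ)^n * variance (T n) P := by
          rw [Finset.sum_const, Finset.card_range, nsmul_eq_mul]; norm_cast
      _ ≤ (2:ℝ)^n * ∫ ω, (T n ω)^2 ∂P := by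
          have h1 := variance_le_expectation_sq (μ := P) (hTmem n).aestronglyMeasurable
          have h2 : (P[(T n)^2] : ℝ) = ∫ ω, (T n ω)^2 ∂P := rfl
          nlinarith [pow_pos (zero_lt_two (α := ℝ)) n]
  -- key summability
  have hKEY : (∑' n : ℕ, ((2:ℝ≥0∞)^n)⁻¹ * ENNReal.ofReal (∫ ω, (T n ω)^2 ∂P)) ≠ ∞ := by
    have hofReal : ∀ n, ENNReal.ofReal (∫ ω, (T n ω)^2 ∂P)
        = ∫⁻ ω, ENNReal.ofReal ((T n ω)^2) ∂P := fun n =>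
      ofReal_integral_eq_lintegral_ofReal (hTmem n).integrable_sq
        (Eventually.of_forall fun ω => sq_nonneg _)
    have hpt : ∀ (n : ℕ) (ω : Ω), ENNReal.ofReal ((T n ω)^2)
        ≤ (if |X 0 0 ω| ≤ (2:ℝ)^n then ENNReal.ofReal ((X 0 0 ω)^2) else 0) := by
      intro n ω
      by_cases h : |X 0 0 ω| ≤ (2:ℝ)^n
      · rw [if_pos h]
        apply ENNReal.ofReal_le_ofReal
        have h1 : |T n ω| ≤ |X 0 0 ω| := abs_truncation_le_abs_self _ _ _
        nlinarith [abs_nonneg (T n ω), sq_abs (T n ω), sq_abs (X 0 0 ω)]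
      · rw [if_neg h]
        have hz : T n ω = 0 := by
          show Set.indicator (Set.Ioc (-(2:ℝ)^n) ((2:ℝ)^n)) id (X 0 0 ω) = 0
          exact Set.indicator_of_notMem
            (fun hmem => h (abs_le.2 ⟨le_of_lt hmem.1, hmem.2⟩)) _
        rw [hz]
        simp
    have hstep : ∀ n : ℕ, ((2:ℝ≥0∞)^n)⁻¹ * ENNReal.ofReal (∫ ω, (T n ω)^2 ∂P)
        ≤ ∫⁻ ω, (if |X 0 0 ω| ≤ (2:ℝ)^n
            then ((2:ℝ≥0∞)^n)⁻¹ * ENNReal.ofReal ((X 0 0 ω)^2) else 0) ∂P := by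
      intro n
      rw [hofReal n, ← lintegral_const_mul' _ _
        (ENNReal.inv_ne_top.2 (pow_ne_zero n (two_ne_zero)))]
      apply lintegral_mono
      intro ω
      dsimp only
      by_cases h : |X 0 0 ω| ≤ (2:ℝ)^n
      · rw [if_pos h]
        exact mul_le_mul_right (le_trans (hpt n ω) (by rw [if_pos h])) _
      · rw [if_neg h]
        have := hpt n ω
        rw [if_neg h] at this
        simp [le_zero_iff.1 this]
    have hmeas' : ∀ n : ℕ, Measurable fun ω =>
        (if |X 0 0 ω| ≤ (2:ℝ)^n then ((2:ℝ≥0∞)^n)⁻¹ * ENNReal.ofReal ((X 0 0 ω)^2) else 0) := by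
      intro n
      exact Measurable.ite (h00 ((isClosed_le continuous_abs continuous_const).measurableSet))
        (measurable_const.mul (ENNReal.measurable_ofReal.comp ((h00.pow_const 2))))
        measurable_const
    have hfin : (∑' n : ℕ, ∫⁻ ω, (if |X 0 0 ω| ≤ (2:ℝ)^n
        then ((2:ℝ≥0∞)^n)⁻¹ * ENNReal.ofReal ((X 0 0 ω)^2) else 0) ∂P) < ∞ := by
      rw [← lintegral_tsum (fun n => (hmeas' n).aemeasurable)]
      have hb := lintegral_mono (μ := P) (fun ω => sl_aux2 (X 0 0 ω))
      refine hb.trans_lt ?_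
      have hi2 : Integrable (fun ω => 2 + 2 * |X 0 0 ω|) P :=
        (integrable_const 2).add (hint.abs.const_mul 2)
      have := hi2.hasFiniteIntegral
      rw [hasFiniteIntegral_iff_ofReal (Eventually.of_forall fun ω => by positivity)] at this
      exact this
    exact ((ENNReal.tsum_le_tsum hstep).trans_lt hfin).ne
  -- Step B : Chebyshev + Borel-Cantelli within rows
  have hBsum : ∀ k : ℕ, (∑' n : ℕ, P {ω | ((k:ℝ)+1)⁻¹ * 2^n
      ≤ |(∑ i ∈ Finset.range (2^n), truncation (X n i) ((2:ℝ)^n) ω) - 2^n * mz n|}) ≠ ∞ := by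
    intro k
    have hterm : ∀ n : ℕ, P {ω | ((k:ℝ)+1)⁻¹ * 2^n
        ≤ |(∑ i ∈ Finset.range (2^n), truncation (X n i) ((2:ℝ)^n) ω) - 2^n * mz n|}
        ≤ ENNReal.ofReal (((k:ℝ)+1)^2)
          * (((2:ℝ≥0∞)^n)⁻¹ * ENNReal.ofReal (∫ ω, (T n ω)^2 ∂P)) := by
      intro n
      have hk0 : (0:ℝ) < (k:ℝ)+1 := by positivity
      have h2n : (0:ℝ) < (2:ℝ)^n := by positivity
      have hc : (0:ℝ) < ((k:ℝ)+1)⁻¹ * 2^n := by positivity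
      have hfun : (fun ω => ∑ i ∈ Finset.range (2^n), truncation (X n i) ((2:ℝ)^n) ω)
          = ∑ i ∈ Finset.range (2^n), truncation (X n i) ((2:ℝ)^n) := by
        ext ω; rw [Finset.sum_apply]
      have hSmem : MemLp (fun ω => ∑ i ∈ Finset.range (2^n),
          truncation (X n i) ((2:ℝ)^n) ω) 2 P := by
        rw [hfun]
        exact memLp_finset_sum' _ (fun i hi => hYmem n i (Finset.mem_range.1 hi))
      have hcheb := meas_ge_le_variance_div_sq (μ := P) hSmem hc
      rw [hES n] at hcheb
      refine hcheb.trans ?_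
      have hE0 : 0 ≤ ∫ ω, (T n ω)^2 ∂P := integral_nonneg fun ω => sq_nonneg _
      have hreal : variance (fun ω => ∑ i ∈ Finset.range (2^n),
          truncation (X n i) ((2:ℝ)^n) ω) P / (((k:ℝ)+1)⁻¹ * 2^n)^2
          ≤ ((k:ℝ)+1)^2 * (((2:ℝ)^n)⁻¹ * ∫ ω, (T n ω)^2 ∂P) := by
        rw [div_le_iff₀ (by positivity)]
        calc variance (fun ω => ∑ i ∈ Finset.range (2^n),
            truncation (X n i) ((2:ℝ)^n) ω) P ≤ 2^n * ∫ ω, (T n ω)^2 ∂P := hvar n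
          _ = (((k:ℝ)+1)^2 * (((2:ℝ)^n)⁻¹ * ∫ ω, (T n ω)^2 ∂P))
              * (((k:ℝ)+1)⁻¹ * 2^n)^2 := by
            have hk0' : ((k:ℝ)+1) ≠ 0 := by positivity
            have h2n' : ((2:ℝ)^n) ≠ 0 := by positivity
            field_simp
      refine (ENNReal.ofReal_le_ofReal hreal).trans ?_
      rw [ENNReal.ofReal_mul (by positivity), ENNReal.ofReal_mul (by positivity),
        ENNReal.ofReal_inv_of_pos (by positivity : (0:ℝ) < 2^n), ← sl_two_pow_enn]
    have h1 : (∑' n : ℕ, P {ω | ((k:ℝ)+1)⁻¹ * 2^n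
        ≤ |(∑ i ∈ Finset.range (2^n), truncation (X n i) ((2:ℝ)^n) ω) - 2^n * mz n|})
        ≤ ENNReal.ofReal (((k:ℝ)+1)^2) * ∑' n : ℕ,
          (((2:ℝ≥0∞)^n)⁻¹ * ENNReal.ofReal (∫ ω, (T n ω)^2 ∂P)) := by
      rw [← ENNReal.tsum_mul_left]
      exact ENNReal.tsum_le_tsum hterm
    exact (h1.trans_lt (ENNReal.mul_lt_top ENNReal.ofReal_lt_top
      (lt_top_iff_ne_top.2 hKEY))).ne
  have hBae : ∀ᵐ ω ∂P, ∀ k : ℕ, ∀ᶠ n in atTop,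
      |(∑ i ∈ Finset.range (2^n), truncation (X n i) ((2:ℝ)^n) ω) - 2^n * mz n|
        < ((k:ℝ)+1)⁻¹ * 2^n := by
    rw [ae_all_iff]
    intro k
    filter_upwards [ae_eventually_notMem (hBsum k)] with ω hω
    filter_upwards [hω] with n hn
    exact not_le.1 hn
  -- final assembly
  filter_upwards [hAae, hBae] with ω hA hB
  have hTend : Tendsto (fun n => ((2:ℝ)^n)⁻¹ * ∑ i ∈ Finset.range (2^n),
      truncation (X n i) ((2:ℝ)^n) ω) atTop (𝓝 0) := by
    have hdiff : Tendsto (fun n => ((2:ℝ)^n)⁻¹ * (∑ i ∈ Finset.range (2^n),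
        truncation (X n i) ((2:ℝ)^n) ω) - mz n) atTop (𝓝 0) := by
      rw [NormedAddCommGroup.tendsto_nhds_zero]
      intro ε hε
      obtain ⟨k, hk⟩ := exists_nat_one_div_lt hε
      have hk' : ((k:ℝ)+1)⁻¹ < ε := by rwa [one_div] at hk
      filter_upwards [hB k] with n hn
      have h2n : (0:ℝ) < 2^n := by positivity
      rw [Real.norm_eq_abs]
      have heq : ((2:ℝ)^n)⁻¹ * (∑ i ∈ Finset.range (2^n), truncation (X n i) ((2:ℝ)^n) ω)
          - mz n = ((2:ℝ)^n)⁻¹ * ((∑ i ∈ Finset.range (2^n), truncation (X n i) ((2:ℝ)^n) ω)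
          - 2^n * mz n) := by field_simp
      rw [heq, abs_mul, abs_inv, abs_of_pos h2n]
      calc ((2:ℝ)^n)⁻¹ * |(∑ i ∈ Finset.range (2^n), truncation (X n i) ((2:ℝ)^n) ω)
            - 2^n * mz n| < ((2:ℝ)^n)⁻¹ * (((k:ℝ)+1)⁻¹ * 2^n) :=
            mul_lt_mul_of_pos_left hn (inv_pos.2 h2n)
        _ = ((k:ℝ)+1)⁻¹ := by field_simp
        _ < ε := hk'
    have h2 := hdiff.add hm0
    rw [add_zero] at h2
    exact h2.congr (fun n => by ring)
  have heqv : (fun n => ((2:ℝ)^n)⁻¹ * ∑ i ∈ Finset.range (2^n),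
      truncation (X n i) ((2:ℝ)^n) ω)
      =ᶠ[atTop] fun n => ((2:ℝ)^n)⁻¹ * ∑ i ∈ Finset.range (2^n), X n i ω := by
    filter_upwards [hA] with n hn
    congr 1
    exact Finset.sum_congr rfl fun i hi => truncation_eq_self (hn i hi)
  exact Filter.Tendsto.congr' heqv hTend
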